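/- arXiv:2305.09954 — 2 statements merged into one kernel-verified Lean document; each statement's English description precedes it below -/
import Mathlib

section
/- For a unit-energy waveform s supported on [0,T_s] and any τ ∈ [0,T_s], the MUI factor satisfies ρ_τ² + ρ_{T_s−τ}² ≤ 1, i.e. the interference power of an asynchronously offset symbol pair never exceeds the synchronous interference power 1. -/
open MeasureTheory Set

-- Cauchy–Schwarz for integrals of real functions
lemma cs_integral {μ : Measure ℝ} (f g : ℝ → ℝ) (hf : MemLp f 2 μ) (hg : MemLp g 2 μ) :
    (∫ t, f t * g t ∂μ) ^ 2 ≤ (∫ t, f t ^ 2 ∂μ) * (∫ t, g t ^ 2 ∂μ) := by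
  have hpq : Real.HolderConjugate 2 2 := ⟨by norm_num, by norm_num, by norm_num⟩
  have hf2 : MemLp f (ENNReal.ofReal 2) μ := by
    convert hf using 2; norm_num
  have hg2 : MemLp g (ENNReal.ofReal 2) μ := by
    convert hg using 2; norm_num
  have h2 := integral_mul_norm_le_Lp_mul_Lq hpq hf2 hg2
  have h1 : ‖∫ t, f t * g t ∂μ‖ ≤ ∫ t, ‖f t‖ * ‖g t‖ ∂μ := by
    calc ‖∫ t, f t * g t ∂μ‖ ≤ ∫ t, ‖f t * g t‖ ∂μ := norm_integral_le_integral_norm _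
    _ = ∫ t, ‖f t‖ * ‖g t‖ ∂μ := by simp [norm_mul]
  have hA : (∫ t, ‖f t‖ ^ (2:ℝ) ∂μ) = ∫ t, f t ^ 2 ∂μ := by
    congr 1; funext t; rw [Real.rpow_two, Real.norm_eq_abs, sq_abs]
  have hB : (∫ t, ‖g t‖ ^ (2:ℝ) ∂μ) = ∫ t, g t ^ 2 ∂μ := by
    congr 1; funext t; rw [Real.rpow_two, Real.norm_eq_abs, sq_abs]
  rw [hA, hB] at h2
  have hAnn : 0 ≤ ∫ t, f t ^ 2 ∂μ := integral_nonneg fun t => sq_nonneg _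
  have hBnn : 0 ≤ ∫ t, g t ^ 2 ∂μ := integral_nonneg fun t => sq_nonneg _
  have key : ‖∫ t, f t * g t ∂μ‖ ≤ (∫ t, f t ^ 2 ∂μ) ^ (1/2:ℝ) * (∫ t, g t ^ 2 ∂μ) ^ (1/2:ℝ) :=
    h1.trans h2
  have := pow_le_pow_left₀ (norm_nonneg _) key 2
  rw [Real.norm_eq_abs, sq_abs] at this
  refine this.trans_eq ?_
  rw [mul_pow, ← Real.sqrt_eq_rpow, ← Real.sqrt_eq_rpow, Real.sq_sqrt hAnn, Real.sq_sqrt hBnn]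

lemma single_bound (Ts : ℝ) (hTs : 0 < Ts)
    (s : ℝ → ℝ) (hmeas : Measurable s)
    (hsupp : Function.support s ⊆ Icc (0:ℝ) Ts)
    (hint : IntegrableOn (fun t => (s t) ^ 2) (Icc (0:ℝ) Ts))
    (σ : ℝ) (hσ : σ ∈ Icc (0:ℝ) Ts) :
    (∫ t in (0:ℝ)..Ts, s t * s (t - σ)) ^ 2 ≤
      (∫ t in σ..Ts, (s t)^2) * (∫ t in (0:ℝ)..(Ts - σ), (s t)^2) := by
  obtain ⟨hσ0, hσT⟩ := hσ
  -- global integrability of s^2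
  have hglob : Integrable (fun t => s t ^ 2) := by
    have heq : (fun t => s t ^ 2) = (Icc (0:ℝ) Ts).indicator (fun t => s t ^ 2) := by
      funext t
      by_cases h : t ∈ Icc (0:ℝ) Ts
      · rw [indicator_of_mem h]
      · rw [indicator_of_notMem h]
        have : s t = 0 := by
          by_contra hne
          exact h (hsupp hne)
        simp [this]
    rw [heq]
    exact (integrable_indicator_iff measurableSet_Icc).2 hint
  -- step 1: reduce to Ioc σ Ts
  have hstep : (∫ t in (0:ℝ)..Ts, s t * s (t - σ)) = ∫ t in Ioc σ Ts, s t * s (t - σ) := by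
    rw [intervalIntegral.integral_of_le (le_trans hσ0 hσT)]
    refine setIntegral_eq_of_subset_of_ae_diff_eq_zero measurableSet_Ioc.nullMeasurableSet
      (fun x hx => ⟨lt_of_le_of_lt hσ0 hx.1, hx.2⟩) ?_
    have hae : ∀ᵐ (x:ℝ), x ≠ σ := by
      refine ae_iff.2 ?_
      simpa using measure_singleton σ
    filter_upwards [hae] with x hx hmem
    obtain ⟨⟨hx0, hxT⟩, hnot⟩ := hmem
    have hxσ : x ≤ σ := by
      by_contra h
      exact hnot ⟨lt_of_not_ge h, hxT⟩
    have hlt : x - σ < 0 := sub_neg.2 (lt_of_le_of_ne hxσ hx)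
    have : s (x - σ) = 0 := by
      by_contra hne
      exact absurd (hsupp hne).1 (not_le.2 hlt)
    simp [this]
  rw [hstep]
  -- MemLp hypotheses
  have hint1 : Integrable (fun t => s t ^ 2) (volume.restrict (Ioc σ Ts)) := hglob.integrableOn
  have hint2 : Integrable (fun t => s (t - σ) ^ 2) (volume.restrict (Ioc σ Ts)) :=
    (hglob.comp_sub_right σ).integrableOn
  have hf : MemLp s 2 (volume.restrict (Ioc σ Ts)) :=
    (memLp_two_iff_integrable_sq hmeas.aestronglyMeasurable).2 hint1
  have hg : MemLp (fun t => s (t - σ)) 2 (volume.restrict (Ioc σ Ts)) :=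
    (memLp_two_iff_integrable_sq (hmeas.comp (measurable_id.sub measurable_const)).aestronglyMeasurable).2 hint2
  have hcs := cs_integral (μ := volume.restrict (Ioc σ Ts)) s (fun t => s (t - σ)) hf hg
  refine hcs.trans_eq ?_
  congr 1
  · rw [intervalIntegral.integral_of_le hσT]
  · rw [← intervalIntegral.integral_of_le hσT]
    have := intervalIntegral.integral_comp_sub_right (a := σ) (b := Ts) (fun t => s t ^ 2) σ
    simpa using this

theorem stmt_4 (Ts : ℝ) (hTs : 0 < Ts)
    (s : ℝ → ℝ) (hmeas : Measurable s)
    (hsupp : Function.support s ⊆ Icc (0:ℝ) Ts)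
    (hint : IntegrableOn (fun t => (s t) ^ 2) (Icc (0:ℝ) Ts))
    (henergy : ∫ t in (0:ℝ)..Ts, (s t) ^ 2 = 1)
    (ρ : ℝ → ℝ)
    (hρ : ∀ τ, ρ τ = ∫ t in (0:ℝ)..Ts, s t * s (t - τ))
    (τ : ℝ) (hτ : τ ∈ Icc (0:ℝ) Ts) :
    (ρ τ) ^ 2 + (ρ (Ts - τ)) ^ 2 ≤ 1 := by
  obtain ⟨hτ0, hτT⟩ := hτ
  have hτ' : Ts - τ ∈ Icc (0:ℝ) Ts := ⟨by linarith, by linarith⟩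
  have hglob : Integrable (fun t => s t ^ 2) := by
    have heq : (fun t => s t ^ 2) = (Icc (0:ℝ) Ts).indicator (fun t => s t ^ 2) := by
      funext t
      by_cases h : t ∈ Icc (0:ℝ) Ts
      · rw [indicator_of_mem h]
      · rw [indicator_of_notMem h]
        have : s t = 0 := by
          by_contra hne
          exact h (hsupp hne)
        simp [this]
    rw [heq]
    exact (integrable_indicator_iff measurableSet_Icc).2 hint
  have hii : ∀ a b : ℝ, IntervalIntegrable (fun t => s t ^ 2) volume a b :=
    fun a b => hglob.intervalIntegrable
  set A : ℝ := ∫ t in (0:ℝ)..τ, (s t)^2 with hA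
  set B : ℝ := ∫ t in τ..Ts, (s t)^2 with hB
  set C : ℝ := ∫ t in (0:ℝ)..(Ts - τ), (s t)^2 with hC
  set D : ℝ := ∫ t in (Ts - τ)..Ts, (s t)^2 with hD
  have hsplit1 : A + B = 1 := by
    rw [hA, hB, intervalIntegral.integral_add_adjacent_intervals (hii 0 τ) (hii τ Ts), henergy]
  have hsplit2 : C + D = 1 := by
    rw [hC, hD,
      intervalIntegral.integral_add_adjacent_intervals (hii 0 (Ts - τ)) (hii (Ts - τ) Ts), henergy]
  have hAnn : 0 ≤ A := intervalIntegral.integral_nonneg hτ0 (fun x _ => sq_nonneg _)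
  have hBnn : 0 ≤ B := intervalIntegral.integral_nonneg hτT (fun x _ => sq_nonneg _)
  have hCnn : 0 ≤ C := intervalIntegral.integral_nonneg (by linarith) (fun x _ => sq_nonneg _)
  have hDnn : 0 ≤ D := intervalIntegral.integral_nonneg (by linarith) (fun x _ => sq_nonneg _)
  have h1 : (ρ τ)^2 ≤ B * C := by
    rw [hρ τ]
    exact single_bound Ts hTs s hmeas hsupp hint τ ⟨hτ0, hτT⟩
  have h2 : (ρ (Ts - τ))^2 ≤ D * A := by
    rw [hρ (Ts - τ)]
    have := single_bound Ts hTs s hmeas hsupp hint (Ts - τ) hτ'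
    simpa [hD, hA] using this
  nlinarith [mul_nonneg hBnn hDnn, mul_nonneg hAnn hCnn]
end

section
/- Under the impractical assumption p^l = p^{l+1} (equal consecutive unit-modulus pilot symbols), the effective pilot energy satisfies |p^l ρ_Δ + p^{l+1} ρ_{T_s−Δ}|² = (ρ_Δ + ρ_{T_s−Δ})² ≤ 1 for any unit-energy waveform supported on [0,T_s], with equality for the rectangular waveform. -/
open MeasureTheory Set

theorem stmt_8 (Ts : ℝ) (hTs : 0 < Ts)
    (s : ℝ → ℝ) (hmeas : Measurable s)
    (hsupp : Function.support s ⊆ Icc (0:ℝ) Ts)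
    (hint : IntegrableOn (fun t => (s t) ^ 2) (Icc (0:ℝ) Ts))
    (henergy : ∫ t in (0:ℝ)..Ts, (s t) ^ 2 = 1)
    (ρ : ℝ → ℝ)
    (hρ : ∀ τ, ρ τ = ∫ t in (0:ℝ)..Ts, s t * s (t - τ))
    (Δ : ℝ) (hΔ : Δ ∈ Icc (0:ℝ) Ts)
    (p : ℂ) (hp : ‖p‖ = 1) :
    ‖p * (ρ Δ : ℝ) + p * (ρ (Ts - Δ) : ℝ)‖ ^ 2
      = (ρ Δ + ρ (Ts - Δ)) ^ 2 ∧
    (ρ Δ + ρ (Ts - Δ)) ^ 2 ≤ 1 ∧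
    ((∀ t, s t = if t ∈ Icc (0:ℝ) Ts then 1 / Real.sqrt Ts else 0) →
      (ρ Δ + ρ (Ts - Δ)) ^ 2 = 1) := by
  obtain ⟨hΔ0, hΔT⟩ := hΔ
  have hzero : ∀ t : ℝ, t ∉ Icc (0:ℝ) Ts → s t = 0 := fun t ht => by
    by_contra h; exact ht (hsupp h)
  -- zero-segment helper
  have hzseg : ∀ (h : ℝ → ℝ) (a b : ℝ), a ≤ b → (∀ t ∈ Ioo a b, h t = 0) →
      (∫ t in a..b, h t) = 0 := by
    intro h a b hab hz
    rw [intervalIntegral.integral_of_le hab, MeasureTheory.integral_Ioc_eq_integral_Ioo,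
      setIntegral_congr_fun measurableSet_Ioo hz]
    simp
  -- global integrability of squares
  have hsq : Integrable (fun t => s t ^ 2) := by
    refine (integrableOn_iff_integrable_of_support_subset ?_).mp hint
    intro t ht
    simp only [Function.mem_support, ne_eq] at ht
    by_contra h
    exact ht (by rw [hzero t h]; ring)
  have hsq_shift : ∀ c : ℝ, Integrable (fun t => s (t - c) ^ 2) :=
    fun c => hsq.comp_sub_right c
  -- master integrability of products of shifts
  have hprod : ∀ c d : ℝ, Integrable (fun t => s (t - c) * s (t - d)) := by
    intro c d
    refine Integrable.mono' (((hsq_shift c).add (hsq_shift d)).const_mul (1/2)) ?_ ?_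
    · exact ((hmeas.comp (measurable_id.sub_const c)).mul
        (hmeas.comp (measurable_id.sub_const d))).aestronglyMeasurable
    · filter_upwards with t
      simp only [Pi.add_apply, Real.norm_eq_abs]
      have h1 : |s (t - c) * s (t - d)| = |s (t - c)| * |s (t - d)| := abs_mul _ _
      nlinarith [sq_nonneg (|s (t - c)| - |s (t - d)|), sq_abs (s (t - c)), sq_abs (s (t - d)),
        abs_nonneg (s (t - c)), abs_nonneg (s (t - d))]
  have hus : Integrable (fun t => s (t + Δ) * s t) := by
    simpa [sub_neg_eq_add] using hprod (-Δ) 0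
  have hsu : Integrable (fun t => s t * s (t + Δ)) := by
    simpa [sub_neg_eq_add] using hprod 0 (-Δ)
  have hsv : Integrable (fun t => s t * s (t - (Ts - Δ))) := by
    simpa using hprod 0 (Ts - Δ)
  have huv : Integrable (fun t => s (t + Δ) * s (t - (Ts - Δ))) := by
    simpa [sub_neg_eq_add] using hprod (-Δ) (Ts - Δ)
  have hu2 : Integrable (fun t => s (t + Δ) ^ 2) := by
    simpa [sub_neg_eq_add, pow_two] using hprod (-Δ) (-Δ)
  have hv2 : Integrable (fun t => s (t - (Ts - Δ)) ^ 2) := by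
    simpa [pow_two] using hprod (Ts - Δ) (Ts - Δ)
  -- c2 : ∫ s t * s (t+Δ) = ρ Δ
  have c2 : (∫ t in (0:ℝ)..Ts, s t * s (t + Δ)) = ρ Δ := by
    have e1 : (∫ t in (-Δ)..(Ts - Δ), s (t + Δ) * s t) = ∫ t in (0:ℝ)..Ts, s t * s (t - Δ) := by
      have h := intervalIntegral.integral_comp_add_right
        (a := -Δ) (b := Ts - Δ) (fun t => s t * s (t - Δ)) Δ
      simp only [add_sub_cancel_right, neg_add_cancel, sub_add_cancel] at h
      exact h
    have hsub : (∫ t in (-Δ)..(0:ℝ), s (t + Δ) * s t) = 0 := by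
      refine hzseg _ _ _ (by linarith) fun t ht => ?_
      rw [hzero t (by simp only [mem_Icc, not_and_or, not_le]; left; exact ht.2), mul_zero]
    have hsub2 : (∫ t in (Ts - Δ)..Ts, s (t + Δ) * s t) = 0 := by
      refine hzseg _ _ _ (by linarith) fun t ht => ?_
      rw [hzero (t + Δ) (by simp only [mem_Icc, not_and_or, not_le]; right; linarith [ht.1]),
        zero_mul]
    have a1 : (∫ t in (-Δ)..(0:ℝ), s (t + Δ) * s t) + (∫ t in (0:ℝ)..(Ts - Δ), s (t + Δ) * s t)
        = ∫ t in (-Δ)..(Ts - Δ), s (t + Δ) * s t :=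
      intervalIntegral.integral_add_adjacent_intervals hus.intervalIntegrable
        hus.intervalIntegrable
    have a2 : (∫ t in (0:ℝ)..(Ts - Δ), s (t + Δ) * s t) + (∫ t in (Ts - Δ)..Ts, s (t + Δ) * s t)
        = ∫ t in (0:ℝ)..Ts, s (t + Δ) * s t :=
      intervalIntegral.integral_add_adjacent_intervals hus.intervalIntegrable
        hus.intervalIntegrable
    calc (∫ t in (0:ℝ)..Ts, s t * s (t + Δ))
        = ∫ t in (0:ℝ)..Ts, s (t + Δ) * s t :=
          intervalIntegral.integral_congr fun t _ => by ring
      _ = ∫ t in (0:ℝ)..(Ts - Δ), s (t + Δ) * s t := by rw [← a2, hsub2, add_zero]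
      _ = ∫ t in (-Δ)..(Ts - Δ), s (t + Δ) * s t := by rw [← a1, hsub, zero_add]
      _ = ∫ t in (0:ℝ)..Ts, s t * s (t - Δ) := e1
      _ = ρ Δ := (hρ Δ).symm
  -- c3
  have c3 : (∫ t in (0:ℝ)..Ts, s t * s (t - (Ts - Δ))) = ρ (Ts - Δ) := (hρ (Ts - Δ)).symm
  -- c4 : energies of the two shifts add to 1
  have c4 : (∫ t in (0:ℝ)..Ts, s (t + Δ) ^ 2) + (∫ t in (0:ℝ)..Ts, s (t - (Ts - Δ)) ^ 2) = 1 := by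
    have e1 : (∫ t in (0:ℝ)..Ts, s (t + Δ) ^ 2) = ∫ t in Δ..(Ts + Δ), s t ^ 2 := by
      have h := intervalIntegral.integral_comp_add_right (a := (0:ℝ)) (b := Ts)
        (fun t => s t ^ 2) Δ
      simpa using h
    have e2 : (∫ t in (0:ℝ)..Ts, s (t - (Ts - Δ)) ^ 2) = ∫ t in (Δ - Ts)..Δ, s t ^ 2 := by
      have h := intervalIntegral.integral_comp_sub_right (a := (0:ℝ)) (b := Ts)
        (fun t => s t ^ 2) (Ts - Δ)
      have h0 : (0:ℝ) - (Ts - Δ) = Δ - Ts := by ring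
      have h1 : Ts - (Ts - Δ) = Δ := by ring
      rw [h0, h1] at h
      exact h
    have z1 : (∫ t in Ts..(Ts + Δ), s t ^ 2) = 0 := by
      refine hzseg _ _ _ (by linarith) fun t ht => ?_
      rw [hzero t (by simp only [mem_Icc, not_and_or, not_le]; right; exact ht.1)]; ring
    have z2 : (∫ t in (Δ - Ts)..(0:ℝ), s t ^ 2) = 0 := by
      refine hzseg _ _ _ (by linarith) fun t ht => ?_
      rw [hzero t (by simp only [mem_Icc, not_and_or, not_le]; left; exact ht.2)]; ring
    have a1 : (∫ t in Δ..Ts, s t ^ 2) + (∫ t in Ts..(Ts + Δ), s t ^ 2)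
        = ∫ t in Δ..(Ts + Δ), s t ^ 2 :=
      intervalIntegral.integral_add_adjacent_intervals hsq.intervalIntegrable
        hsq.intervalIntegrable
    have a2 : (∫ t in (Δ - Ts)..(0:ℝ), s t ^ 2) + (∫ t in (0:ℝ)..Δ, s t ^ 2)
        = ∫ t in (Δ - Ts)..Δ, s t ^ 2 :=
      intervalIntegral.integral_add_adjacent_intervals hsq.intervalIntegrable
        hsq.intervalIntegrable
    have a3 : (∫ t in (0:ℝ)..Δ, s t ^ 2) + (∫ t in Δ..Ts, s t ^ 2)
        = ∫ t in (0:ℝ)..Ts, s t ^ 2 :=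
      intervalIntegral.integral_add_adjacent_intervals hsq.intervalIntegrable
        hsq.intervalIntegrable
    rw [e1, e2, ← a1, ← a2, z1, z2, add_zero, zero_add, ← henergy, ← a3]
    ring
  -- c5 : cross term vanishes
  have c5 : (∫ t in (0:ℝ)..Ts, s (t + Δ) * s (t - (Ts - Δ))) = 0 := by
    have hae : ∀ᵐ t : ℝ, s (t + Δ) * s (t - (Ts - Δ)) = 0 := by
      rw [MeasureTheory.ae_iff]
      refine measure_mono_null (fun t ht => ?_) (Real.volume_singleton (a := Ts - Δ))
      simp only [mem_setOf_eq] at ht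
      have h1 : s (t + Δ) ≠ 0 := fun h => ht (by rw [h, zero_mul])
      have h2 : s (t - (Ts - Δ)) ≠ 0 := fun h => ht (by rw [h, mul_zero])
      have m1 := hsupp h1
      have m2 := hsupp h2
      simp only [mem_Icc] at m1 m2
      simp only [mem_singleton_iff]
      linarith [m1.2, m2.1]
    calc (∫ t in (0:ℝ)..Ts, s (t + Δ) * s (t - (Ts - Δ)))
        = ∫ t in (0:ℝ)..Ts, (0:ℝ) := by
          refine intervalIntegral.integral_congr_ae ?_
          filter_upwards [hae] with t ht _
          exact ht
      _ = 0 := by simp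
  -- Part 2 : the inequality
  have hineq : (ρ Δ + ρ (Ts - Δ)) ^ 2 ≤ 1 := by
    set I : ℝ := ρ Δ + ρ (Ts - Δ) with hI
    have hnonneg : 0 ≤ ∫ t in (0:ℝ)..Ts,
        (s t - I * (s (t + Δ) + s (t - (Ts - Δ)))) ^ 2 :=
      intervalIntegral.integral_nonneg (by linarith) fun t _ => sq_nonneg _
    have iB1 : IntervalIntegrable (fun t => (-(2*I)) * (s t * s (t + Δ))
        + ((-(2*I)) * (s t * s (t - (Ts - Δ))) + (I^2 * s (t + Δ) ^ 2
        + (I^2 * s (t - (Ts - Δ)) ^ 2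
        + (2*I^2) * (s (t + Δ) * s (t - (Ts - Δ))))))) volume 0 Ts := by
      apply Integrable.intervalIntegrable
      exact (hsu.const_mul _).add ((hsv.const_mul _).add ((hu2.const_mul _).add
        ((hv2.const_mul _).add (huv.const_mul _))))
    have iB2 : IntervalIntegrable (fun t => (-(2*I)) * (s t * s (t - (Ts - Δ)))
        + (I^2 * s (t + Δ) ^ 2 + (I^2 * s (t - (Ts - Δ)) ^ 2
        + (2*I^2) * (s (t + Δ) * s (t - (Ts - Δ)))))) volume 0 Ts := by
      apply Integrable.intervalIntegrable
      exact (hsv.const_mul _).add ((hu2.const_mul _).add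
        ((hv2.const_mul _).add (huv.const_mul _)))
    have iB3 : IntervalIntegrable (fun t => I^2 * s (t + Δ) ^ 2
        + (I^2 * s (t - (Ts - Δ)) ^ 2
        + (2*I^2) * (s (t + Δ) * s (t - (Ts - Δ))))) volume 0 Ts := by
      apply Integrable.intervalIntegrable
      exact (hu2.const_mul _).add ((hv2.const_mul _).add (huv.const_mul _))
    have iB4 : IntervalIntegrable (fun t => I^2 * s (t - (Ts - Δ)) ^ 2
        + (2*I^2) * (s (t + Δ) * s (t - (Ts - Δ)))) volume 0 Ts := by
      apply Integrable.intervalIntegrable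
      exact (hv2.const_mul _).add (huv.const_mul _)
    have iA1 : IntervalIntegrable (fun t => (-(2*I)) * (s t * s (t + Δ))) volume 0 Ts :=
      (hsu.const_mul _).intervalIntegrable
    have iA2 : IntervalIntegrable (fun t => (-(2*I)) * (s t * s (t - (Ts - Δ)))) volume 0 Ts :=
      (hsv.const_mul _).intervalIntegrable
    have iA3 : IntervalIntegrable (fun t => I^2 * s (t + Δ) ^ 2) volume 0 Ts :=
      (hu2.const_mul _).intervalIntegrable
    have iA4 : IntervalIntegrable (fun t => I^2 * s (t - (Ts - Δ)) ^ 2) volume 0 Ts :=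
      (hv2.const_mul _).intervalIntegrable
    have iA5 : IntervalIntegrable (fun t => (2*I^2) * (s (t + Δ) * s (t - (Ts - Δ)))) volume 0 Ts :=
      (huv.const_mul _).intervalIntegrable
    have hexp : (∫ t in (0:ℝ)..Ts, (s t - I * (s (t + Δ) + s (t - (Ts - Δ)))) ^ 2)
        = (∫ t in (0:ℝ)..Ts, s t ^ 2)
          + ((-(2*I)) * (∫ t in (0:ℝ)..Ts, s t * s (t + Δ))
          + ((-(2*I)) * (∫ t in (0:ℝ)..Ts, s t * s (t - (Ts - Δ)))
          + (I^2 * (∫ t in (0:ℝ)..Ts, s (t + Δ) ^ 2)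
          + (I^2 * (∫ t in (0:ℝ)..Ts, s (t - (Ts - Δ)) ^ 2)
          + (2*I^2) * (∫ t in (0:ℝ)..Ts, s (t + Δ) * s (t - (Ts - Δ))))))) := by
      rw [intervalIntegral.integral_congr (g := fun t =>
          s t ^ 2 + ((-(2*I)) * (s t * s (t + Δ)) + ((-(2*I)) * (s t * s (t - (Ts - Δ)))
            + (I^2 * s (t + Δ) ^ 2 + (I^2 * s (t - (Ts - Δ)) ^ 2
            + (2*I^2) * (s (t + Δ) * s (t - (Ts - Δ)))))))) (fun t _ => by ring)]
      rw [intervalIntegral.integral_add hsq.intervalIntegrable iB1,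
        intervalIntegral.integral_add iA1 iB2,
        intervalIntegral.integral_add iA2 iB3,
        intervalIntegral.integral_add iA3 iB4,
        intervalIntegral.integral_add iA4 iA5,
        intervalIntegral.integral_const_mul, intervalIntegral.integral_const_mul,
        intervalIntegral.integral_const_mul, intervalIntegral.integral_const_mul,
        intervalIntegral.integral_const_mul]
    rw [hexp, henergy, c2, c3, c5, mul_zero, add_zero] at hnonneg
    have hsum : I^2 * (∫ t in (0:ℝ)..Ts, s (t + Δ) ^ 2)
        + I^2 * (∫ t in (0:ℝ)..Ts, s (t - (Ts - Δ)) ^ 2) = I^2 := by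
      rw [← mul_add, c4, mul_one]
    have h2 : (-(2*I)) * (ρ Δ) + (-(2*I)) * (ρ (Ts - Δ)) = -(2*(I^2)) := by
      rw [hI]; ring
    linarith [hnonneg, hsum, h2]
  refine ⟨?_, hineq, ?_⟩
  · have hcast : p * ((ρ Δ : ℝ) : ℂ) + p * ((ρ (Ts - Δ) : ℝ) : ℂ)
        = p * (((ρ Δ + ρ (Ts - Δ) : ℝ)) : ℂ) := by push_cast; ring
    rw [hcast, norm_mul, hp, one_mul, Complex.norm_real, Real.norm_eq_abs, sq_abs]
  · intro hrect
    have hρc : ∀ c : ℝ, 0 ≤ c → c ≤ Ts → ρ c = (Ts - c) / Ts := by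
      intro c hc0 hcT
      have hsc : Integrable (fun t => s t * s (t - c)) := by simpa using hprod 0 c
      have key : ∀ t, s t * s (t - c) = if t ∈ Icc c Ts then (1 / Real.sqrt Ts)^2 else 0 := by
        intro t
        by_cases h : t ∈ Icc c Ts
        · obtain ⟨h1, h2⟩ := h
          rw [if_pos (show t ∈ Icc c Ts from ⟨h1, h2⟩), hrect t, hrect (t - c),
            if_pos (show t ∈ Icc (0:ℝ) Ts from ⟨by linarith, h2⟩),
            if_pos (show t - c ∈ Icc (0:ℝ) Ts from ⟨by linarith, by linarith⟩)]
          ring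
        · rw [if_neg h]
          simp only [mem_Icc, not_and_or, not_le] at h
          rcases h with h | h
          · rw [hrect (t - c), if_neg, mul_zero]
            simp only [mem_Icc, not_and_or, not_le]; left; linarith
          · rw [hrect t, if_neg, zero_mul]
            simp only [mem_Icc, not_and_or, not_le]; right; linarith
      rw [hρ]
      have split : (∫ t in (0:ℝ)..c, s t * s (t - c)) + (∫ t in c..Ts, s t * s (t - c))
          = ∫ t in (0:ℝ)..Ts, s t * s (t - c) :=
        intervalIntegral.integral_add_adjacent_intervals hsc.intervalIntegrable
          hsc.intervalIntegrable
      have z : (∫ t in (0:ℝ)..c, s t * s (t - c)) = 0 := by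
        refine hzseg _ _ _ hc0 fun t ht => ?_
        rw [key t, if_neg]
        simp only [mem_Icc, not_and_or, not_le]; left; exact ht.2
      have m : (∫ t in c..Ts, s t * s (t - c)) = (Ts - c) * (1 / Real.sqrt Ts)^2 := by
        rw [intervalIntegral.integral_congr (g := fun _ => (1 / Real.sqrt Ts)^2)
          (fun t ht => by rw [key t, if_pos]; rwa [uIcc_of_le hcT] at ht)]
        rw [intervalIntegral.integral_const, smul_eq_mul]
      rw [← split, z, zero_add, m, div_pow, one_pow, Real.sq_sqrt hTs.le]
      field_simp
    rw [hρc Δ hΔ0 hΔT, hρc (Ts - Δ) (by linarith) (by linarith)]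
    have hone : (Ts - Δ) / Ts + (Ts - (Ts - Δ)) / Ts = 1 := by field_simp; ring
    rw [hone]; norm_num
end
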